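/- arXiv:1311.5548 — 9 statements merged into one kernel-verified Lean document; each statement's English description precedes it below -/
import Mathlib

section
/- Let n ≥ 1 and let A = {a_0 < a_1 < … < a_{k−1}} be a nonempty subset of the chain C_n. The interior of the simplex σ^(n){a_0,…,a_{k−1}}, i.e. the set of monotone maps α : C_n → C_n whose image is exactly A, is closed under addition: if α and β are monotone maps C_n → C_n with image equal to A, then the pointwise maximum x ↦ max(α(x), β(x)) also has image equal to A. -/
/-- The simplex σ^(n){a_0,…,a_{k−1}}: monotone maps Fin n → Fin n whose image
is contained in the range of the strictly monotone enumeration `a : Fin k → Fin n`. -/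
def EndoSimplex (n k : ℕ) (a : Fin k → Fin n) : Set (Fin n → Fin n) :=
  {α | Monotone α ∧ ∀ x, α x ∈ Set.range a}

/-- Number of points of `Fin n` at which `α` takes the value `v`. -/
def FixCount (n : ℕ) (α : Fin n → Fin n) (v : Fin n) : ℕ :=
  (Finset.univ.filter (fun i => α i = v)).card

/-- Discrete t-neighborhood DN^t_m of the vertex `ā_m` of the simplex:
elements of the simplex taking the value `a m` at least `n − t` times. -/
def DN (n k : ℕ) (a : Fin k → Fin n) (m : Fin k) (t : ℕ) : Set (Fin n → Fin n) :=
  {α | α ∈ EndoSimplex n k a ∧ n - t ≤ FixCount n α (a m)}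

/-- the interior of the simplex (maps with image exactly A)
is closed under addition (pointwise maximum). -/
theorem interior_closed_under_addition (n k : ℕ) (hn : 1 ≤ n) (hk : 1 ≤ k)
    (a : Fin k → Fin n) (ha : StrictMono a)
    (α β : Fin n → Fin n) (hα : Monotone α) (hβ : Monotone β)
    (hαA : Set.range α = Set.range a) (hβA : Set.range β = Set.range a) :
    Set.range (fun x => max (α x) (β x)) = Set.range a := by
  apply Set.Subset.antisymm
  · rintro _ ⟨x, rfl⟩
    show α x ⊔ β x ∈ Set.range a
    rcases le_total (α x) (β x) with h | h
    · rw [max_eq_right h]; exact hβA ▸ ⟨x, rfl⟩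
    · rw [max_eq_left h]; exact hαA ▸ ⟨x, rfl⟩
  · rintro _ ⟨j, rfl⟩
    obtain ⟨x, hx⟩ : a j ∈ Set.range α := hαA ▸ ⟨j, rfl⟩
    obtain ⟨y, hy⟩ : a j ∈ Set.range β := hβA ▸ ⟨j, rfl⟩
    rcases le_total x y with h | h
    · exact ⟨x, by simp [hx, max_eq_left (hy ▸ hβ h)]⟩
    · exact ⟨y, by simp [hy, max_eq_right (hx ▸ hα h)]⟩
end

section
/- Let n ≥ 1, let A = {a_0 < … < a_{k−1}} be a nonempty subset of the chain C_n, fix m ∈ {0,…,k−1} and s ∈ {0,…,n}. Then the s-th layer of the simplex σ^(n){a_0,…,a_{k−1}} with respect to the vertex ā_m is closed under addition: if α and β are monotone maps C_n → C_n with image contained in A such that each of α and β takes the value a_m at exactly s elements of C_n, then the pointwise maximum x ↦ max(α(x), β(x)) also takes the value a_m at exactly s elements of C_n. -/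
/-- Two lower sets in a linear order are nested. -/
lemma lower_nested {n : ℕ} (S T : Finset (Fin n))
    (hS : ∀ ⦃i j : Fin n⦄, i ≤ j → j ∈ S → i ∈ S)
    (hT : ∀ ⦃i j : Fin n⦄, i ≤ j → j ∈ T → i ∈ T) :
    S ⊆ T ∨ T ⊆ S := by
  by_contra h
  push_neg at h
  obtain ⟨x, hxS, hxT⟩ := Finset.not_subset.mp h.1
  obtain ⟨y, hyT, hyS⟩ := Finset.not_subset.mp h.2
  rcases le_total x y with hxy | hyx
  · exact hxT (hT hxy hyT)
  · exact hyS (hS hyx hxS)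

lemma inter_card_of_lower {n : ℕ} (S T : Finset (Fin n))
    (hS : ∀ ⦃i j : Fin n⦄, i ≤ j → j ∈ S → i ∈ S)
    (hT : ∀ ⦃i j : Fin n⦄, i ≤ j → j ∈ T → i ∈ T) :
    (S ∩ T).card = min S.card T.card := by
  rcases lower_nested S T hS hT with hst | hts
  · rw [Finset.inter_eq_left.mpr hst, min_eq_left (Finset.card_le_card hst)]
  · rw [Finset.inter_eq_right.mpr hts, min_eq_right (Finset.card_le_card hts)]

lemma split_card {n : ℕ} (γ : Fin n → Fin n) (v : Fin n) :
    (Finset.univ.filter (fun i => γ i ≤ v)).card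
      = (Finset.univ.filter (fun i => γ i < v)).card + FixCount n γ v := by
  rw [FixCount, ← Finset.card_union_of_disjoint]
  · congr 1
    ext i
    simp [le_iff_lt_or_eq]
  · rw [Finset.disjoint_left]
    intro i h1 h2
    simp only [Finset.mem_filter] at h1 h2
    exact absurd h2.2 (ne_of_lt h1.2)

/-- each layer of the simplex with respect to a vertex ā_m is
closed under addition: if α and β each take the value a m at exactly s points,
so does their pointwise maximum (which again lies in the simplex). -/
theorem layer_closed_under_addition (n k : ℕ) (hn : 1 ≤ n) (hk : 1 ≤ k)
    (a : Fin k → Fin n) (ha : StrictMono a) (m : Fin k) (s : ℕ) (hs : s ≤ n)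
    (α β : Fin n → Fin n)
    (hα : α ∈ EndoSimplex n k a) (hβ : β ∈ EndoSimplex n k a)
    (hαs : FixCount n α (a m) = s) (hβs : FixCount n β (a m) = s) :
    (fun x => max (α x) (β x)) ∈ EndoSimplex n k a ∧
    FixCount n (fun x => max (α x) (β x)) (a m) = s := by
  obtain ⟨hαm, hαr⟩ := hα
  obtain ⟨hβm, hβr⟩ := hβ
  have hmem : (fun x => max (α x) (β x)) ∈ EndoSimplex n k a := by
    constructor
    · intro x y hxy
      exact max_le_max (hαm hxy) (hβm hxy)
    · intro x
      obtain ⟨i, hi⟩ := hαr x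
      obtain ⟨j, hj⟩ := hβr x
      exact ⟨max i j, by rw [ha.monotone.map_max, hi, hj]⟩
  refine ⟨hmem, ?_⟩
  set v := a m with hv
  have hlowle : ∀ (γ : Fin n → Fin n), Monotone γ →
      ∀ ⦃i j : Fin n⦄, i ≤ j → j ∈ Finset.univ.filter (fun i => γ i ≤ v) →
        i ∈ Finset.univ.filter (fun i => γ i ≤ v) := by
    intro γ hγ i j hij hjm
    simp only [Finset.mem_filter, Finset.mem_univ, true_and] at hjm ⊢
    exact le_trans (hγ hij) hjm
  have hlowlt : ∀ (γ : Fin n → Fin n), Monotone γ →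
      ∀ ⦃i j : Fin n⦄, i ≤ j → j ∈ Finset.univ.filter (fun i => γ i < v) →
        i ∈ Finset.univ.filter (fun i => γ i < v) := by
    intro γ hγ i j hij hjm
    simp only [Finset.mem_filter, Finset.mem_univ, true_and] at hjm ⊢
    exact lt_of_le_of_lt (hγ hij) hjm
  have hle : (Finset.univ.filter (fun i => max (α i) (β i) ≤ v))
      = (Finset.univ.filter (fun i => α i ≤ v)) ∩ (Finset.univ.filter (fun i => β i ≤ v)) := by
    ext i; simp [max_le_iff, and_assoc]
  have hlt : (Finset.univ.filter (fun i => max (α i) (β i) < v))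
      = (Finset.univ.filter (fun i => α i < v)) ∩ (Finset.univ.filter (fun i => β i < v)) := by
    ext i; simp [max_lt_iff, and_assoc]
  have h1 := split_card α v
  have h2 := split_card β v
  have h3 := split_card (fun i => max (α i) (β i)) v
  rw [hle, hlt, inter_card_of_lower _ _ (hlowle α hαm) (hlowle β hβm),
    inter_card_of_lower _ _ (hlowlt α hαm) (hlowlt β hβm)] at h3
  omega
end

section
/- Let n ≥ 2, let A = {a_0 < … < a_{k−1}} be a nonempty subset of the chain C_n and fix m ∈ {0,…,k−1}. Then the discrete 1-neighborhood DN^1_m = {α ∈ σ^(n){a_0,…,a_{k−1}} : α(i) = a_m for at least n−1 elements i of C_n} is a subsemiring of the simplex σ^(n){a_0,…,a_{k−1}}: it is closed under the pointwise maximum (α+β)(x) = max(α(x), β(x)) and under composition (α·β)(x) = β(α(x)). -/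
lemma fixcount_iff (n : ℕ) (α : Fin n → Fin n) (c : Fin n) :
    n - 1 ≤ FixCount n α c ↔
      (Finset.univ.filter (fun i => ¬ α i = c)).card ≤ 1 := by
  have h := Finset.card_filter_add_card_filter_not
    (s := (Finset.univ : Finset (Fin n))) (p := fun i => α i = c)
  rw [Finset.card_univ, Fintype.card_fin] at h
  unfold FixCount
  omega

lemma fix_self {n : ℕ} (β : Fin n → Fin n) (hm : Monotone β) (c : Fin n)
    (h : n - 1 ≤ FixCount n β c) : β c = c := by
  rw [fixcount_iff, Finset.card_le_one] at h
  by_contra hne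
  have hall : ∀ i : Fin n, i ≠ c → β i = c := by
    intro i hi
    by_contra hbi
    exact hi (h i (Finset.mem_filter.mpr ⟨Finset.mem_univ _, hbi⟩) c
      (Finset.mem_filter.mpr ⟨Finset.mem_univ _, hne⟩))
  have hlt := c.isLt
  have h1 : c ≤ β c := by
    rcases Nat.eq_zero_or_pos c.val with h0 | h0
    · exact Fin.le_def.mpr (by omega)
    · have hi : (⟨c.val - 1, by omega⟩ : Fin n) ≠ c := by
        intro he
        have := congrArg Fin.val he
        simp only [] at this
        omega
      have hv := hall _ hi
      have hle := hm (a := ⟨c.val - 1, by omega⟩) (b := c)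
        (Fin.le_def.mpr (Nat.sub_le _ _))
      rw [hv] at hle; exact hle
  have h2 : β c ≤ c := by
    rcases Nat.lt_or_ge (c.val + 1) n with h0 | h0
    · have hi : (⟨c.val + 1, h0⟩ : Fin n) ≠ c := by
        intro he
        have := congrArg Fin.val he
        simp only [] at this
        omega
      have hv := hall _ hi
      have hle := hm (a := c) (b := ⟨c.val + 1, h0⟩)
        (Fin.le_def.mpr (Nat.le_succ _))
      rw [hv] at hle; exact hle
    · have := (β c).isLt
      exact Fin.le_def.mpr (by omega)
  exact hne (le_antisymm h2 h1)

/-- the discrete 1-neighborhood DN^1_m of a vertex is a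
subsemiring of the simplex: closed under pointwise maximum and composition. -/
theorem DN1_is_subsemiring (n k : ℕ) (hn : 2 ≤ n) (hk : 1 ≤ k)
    (a : Fin k → Fin n) (ha : StrictMono a) (m : Fin k)
    (α β : Fin n → Fin n)
    (hα : α ∈ DN n k a m 1) (hβ : β ∈ DN n k a m 1) :
    (fun x => max (α x) (β x)) ∈ DN n k a m 1 ∧
    (fun x => β (α x)) ∈ DN n k a m 1 := by
  obtain ⟨⟨hmα, hrα⟩, hfα⟩ := hα
  obtain ⟨⟨hmβ, hrβ⟩, hfβ⟩ := hβ
  set c := a m with hc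
  have hβc : β c = c := fix_self β hmβ c hfβ
  have hbα := (Finset.card_le_one).mp ((fixcount_iff n α c).mp hfα)
  have hbβ := (Finset.card_le_one).mp ((fixcount_iff n β c).mp hfβ)
  constructor
  · refine ⟨⟨?_, ?_⟩, ?_⟩
    · intro x y hxy
      exact max_le_max (hmα hxy) (hmβ hxy)
    · intro x
      obtain ⟨i, hi⟩ := hrα x
      obtain ⟨j, hj⟩ := hrβ x
      exact ⟨max i j, by rw [ha.monotone.map_max, hi, hj]⟩
    · rw [fixcount_iff n (fun x => max (α x) (β x)) c, Finset.card_le_one]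
      intro i hi j hj
      simp only [Finset.mem_filter, Finset.mem_univ, true_and] at hi hj
      by_contra hij
      by_cases hαi : α i = c
      · have hβi : β i ≠ c := fun h => hi (by rw [hαi, h, max_self])
        have hβj : β j = c := by
          by_contra h
          exact hij (hbβ i (Finset.mem_filter.mpr ⟨Finset.mem_univ _, hβi⟩) j
            (Finset.mem_filter.mpr ⟨Finset.mem_univ _, h⟩))
        have h1 : c < β i := lt_of_not_ge fun h => hi (by rw [hαi, max_eq_left h])
        have h2 : c < α j := lt_of_not_ge fun h => hj (by rw [hβj, max_eq_right h])
        rcases lt_or_gt_of_ne hij with h | h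
        · exact absurd (hmβ h.le) (by rw [hβj]; exact not_le.mpr h1)
        · exact absurd (hmα h.le) (by rw [hαi]; exact not_le.mpr h2)
      · have hαj : α j = c := by
          by_contra h
          exact hij (hbα i (Finset.mem_filter.mpr ⟨Finset.mem_univ _, hαi⟩) j
            (Finset.mem_filter.mpr ⟨Finset.mem_univ _, h⟩))
        have hβj : β j ≠ c := fun h => hj (by rw [hαj, h, max_self])
        have hβi : β i = c := by
          by_contra h
          exact hij (hbβ i (Finset.mem_filter.mpr ⟨Finset.mem_univ _, h⟩) j
            (Finset.mem_filter.mpr ⟨Finset.mem_univ _, hβj⟩))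
        have h1 : c < α i := lt_of_not_ge fun h => hi (by rw [hβi, max_eq_right h])
        have h2 : c < β j := lt_of_not_ge fun h => hj (by rw [hαj, max_eq_left h])
        rcases lt_or_gt_of_ne hij with h | h
        · exact absurd (hmα h.le) (by rw [hαj]; exact not_le.mpr h1)
        · exact absurd (hmβ h.le) (by rw [hβi]; exact not_le.mpr h2)
  · refine ⟨⟨hmβ.comp hmα, fun x => hrβ (α x)⟩, ?_⟩
    have hsub : Finset.univ.filter (fun i => α i = c) ⊆
        Finset.univ.filter (fun i => β (α i) = c) := by
      intro i hi
      simp only [Finset.mem_filter, Finset.mem_univ, true_and] at hi ⊢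
      rw [hi, hβc]
    calc n - 1 ≤ FixCount n α c := hfα
      _ ≤ FixCount n (fun x => β (α x)) c := Finset.card_le_card hsub
end

section
/- Let n ≥ 2 and let A = {a_0 < … < a_{k−1}} ⊆ C_n with 0 < a_0 and a_{k−1} < n−1 (so that σ^(n){a_0,…,a_{k−1}} is an internal simplex). Then for each m ∈ {0,…,k−1}, the product of any two elements of DN^1_m is the constant endomorphism ā_m: for all α, β ∈ DN^1_m one has α·β = ā_m. In particular multiplication on DN^1_m is commutative and every element α of DN^1_m is a_m-nilpotent, with α·α = ā_m. -/
/-- An element of DN¹ takes the value `a m` at every interior point. -/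
lemma DN1_interior (n k : ℕ) (a : Fin k → Fin n) (m : Fin k)
    (β : Fin n → Fin n) (hβ : β ∈ DN n k a m 1)
    (j : Fin n) (hj0 : 0 < (j : ℕ)) (hj1 : (j : ℕ) < n - 1) : β j = a m := by
  obtain ⟨⟨hmono, _⟩, hcount⟩ := hβ
  by_contra hne
  have hsub : (Finset.univ.filter (fun i => β i = a m)) ⊆ Finset.univ.erase j := by
    intro i hi
    simp only [Finset.mem_filter] at hi
    simp only [Finset.mem_erase, Finset.mem_univ, and_true]
    rintro rfl; exact hne hi.2
  have heq : (Finset.univ.filter (fun i => β i = a m)) = Finset.univ.erase j := by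
    apply Finset.eq_of_subset_of_card_le hsub
    have h2 : n - 1 ≤ FixCount n β (a m) := hcount
    simpa [FixCount, Finset.card_erase_of_mem, Finset.card_univ] using h2
  have hjm : (⟨(j:ℕ) - 1, by omega⟩ : Fin n) ∈ Finset.univ.erase j := by
    refine Finset.mem_erase.mpr ⟨?_, Finset.mem_univ _⟩
    exact Fin.ne_of_val_ne (by simp; omega)
  have hjp : (⟨(j:ℕ) + 1, by omega⟩ : Fin n) ∈ Finset.univ.erase j := by
    refine Finset.mem_erase.mpr ⟨?_, Finset.mem_univ _⟩
    exact Fin.ne_of_val_ne (by first | (simp; omega) | simp)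
  rw [← heq, Finset.mem_filter] at hjm hjp
  have hle1 : β ⟨(j:ℕ) - 1, by omega⟩ ≤ β j := hmono (by first | (simp [Fin.le_def]; omega) | simp [Fin.le_def])
  have hle2 : β j ≤ β ⟨(j:ℕ) + 1, by omega⟩ := hmono (by simp [Fin.le_def])
  rw [hjm.2] at hle1
  rw [hjp.2] at hle2
  exact hne (le_antisymm hle2 hle1)

/-- in an internal simplex (0 < a_0 and a_{k−1} < n−1), the
product of any two elements of DN^1_m is the constant ā_m; in particular
multiplication on DN^1_m is commutative and every α ∈ DN^1_m satisfies
α·α = ā_m (so each element is a_m-nilpotent). -/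
theorem internal_DN1_product_constant (n k : ℕ) (hn : 2 ≤ n) (hk : 0 < k)
    (a : Fin k → Fin n) (ha : StrictMono a)
    (h0 : 0 < (a ⟨0, hk⟩ : ℕ))
    (h1 : (a ⟨k - 1, by omega⟩ : ℕ) < n - 1)
    (m : Fin k) :
    (∀ α β : Fin n → Fin n, α ∈ DN n k a m 1 → β ∈ DN n k a m 1 →
      (fun x => β (α x)) = fun _ => a m) ∧
    (∀ α β : Fin n → Fin n, α ∈ DN n k a m 1 → β ∈ DN n k a m 1 →
      (fun x => β (α x)) = fun x => α (β x)) ∧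
    (∀ α : Fin n → Fin n, α ∈ DN n k a m 1 →
      (fun x => α (α x)) = fun _ => a m) := by
  have hmain : ∀ α β : Fin n → Fin n, α ∈ DN n k a m 1 → β ∈ DN n k a m 1 →
      (fun x => β (α x)) = fun _ => a m := by
    intro α β hα hβ
    funext x
    have hrange := hα.1.2 x
    obtain ⟨i, hi⟩ := hrange
    have hlo : a ⟨0, hk⟩ ≤ a i := ha.monotone (by simp [Fin.le_def])
    have hhi : a i ≤ a ⟨k - 1, by omega⟩ := ha.monotone (by simp [Fin.le_def]; omega)
    rw [hi] at hlo hhi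
    exact DN1_interior n k a m β hβ (α x) (by omega) (by omega)
  refine ⟨hmain, ?_, fun α hα => hmain α α hα hα⟩
  intro α β hα hβ
  rw [hmain α β hα hβ, hmain β α hβ hα]
end

section
/- Let n ≥ 1 and let A = {a_0 < … < a_{k−1}} be a nonempty subset of the chain C_n. Then for any monotone map α : C_n → C_n with image contained in A, the following are equivalent: α(i) = a_0 for at least a_0 + 1 elements i of C_n, and α(a_0) = a_0. Consequently the discrete (n−a_0−1)-neighborhood of the least vertex ā_0 equals σ^(n){a_0,…,a_{k−1}} ∩ E^(a_0)_{C_n}. -/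
/-- for α in the simplex, α takes the value a_0 at least a_0 + 1
times iff a_0 is a fixed point of α; consequently the discrete
(n − a_0 − 1)-neighborhood of the least vertex ā_0 equals the intersection of
the simplex with E^(a_0), the endomorphisms fixing a_0. -/
theorem DN_least_vertex_eq (n k : ℕ) (hn : 1 ≤ n) (hk : 0 < k)
    (a : Fin k → Fin n) (ha : StrictMono a) :
    (∀ α : Fin n → Fin n, α ∈ EndoSimplex n k a →
      ((a ⟨0, hk⟩ : ℕ) + 1 ≤ FixCount n α (a ⟨0, hk⟩) ↔
        α (a ⟨0, hk⟩) = a ⟨0, hk⟩)) ∧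
    DN n k a ⟨0, hk⟩ (n - (a ⟨0, hk⟩ : ℕ) - 1) =
      EndoSimplex n k a ∩ {α | α (a ⟨0, hk⟩) = a ⟨0, hk⟩} := by
  set a0 := a ⟨0, hk⟩ with ha0
  have hmin : ∀ j, a0 ≤ a j := fun j => ha.monotone (by simp [Fin.le_def])
  have main : ∀ α : Fin n → Fin n, α ∈ EndoSimplex n k a →
      ((a0 : ℕ) + 1 ≤ FixCount n α a0 ↔ α a0 = a0) := by
    rintro α ⟨hmono, hrange⟩
    constructor
    · intro hcard
      by_contra hne
      obtain ⟨j, hj⟩ := hrange a0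
      have h1 : a0 < α a0 := lt_of_le_of_ne (hj ▸ hmin j) (fun h => hne h.symm)
      have hsub : (Finset.univ.filter (fun i => α i = a0)) ⊆ Finset.Iio a0 := by
        intro i hi
        simp only [Finset.mem_filter] at hi
        rw [Finset.mem_Iio]
        by_contra hle
        push_neg at hle
        exact absurd (hmono hle) (by rw [hi.2]; exact not_le.mpr h1)
      have := Finset.card_le_card hsub
      rw [Fin.card_Iio] at this
      exact absurd (le_trans hcard this) (by omega)
    · intro hfix
      have hsub : Finset.Iic a0 ⊆ Finset.univ.filter (fun i => α i = a0) := by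
        intro i hi
        rw [Finset.mem_Iic] at hi
        simp only [Finset.mem_filter, Finset.mem_univ, true_and]
        have h1 : α i ≤ a0 := hfix ▸ hmono hi
        obtain ⟨j, hj⟩ := hrange i
        exact le_antisymm h1 (hj ▸ hmin j)
      have := Finset.card_le_card hsub
      rw [Fin.card_Iic] at this
      exact this
  refine ⟨main, ?_⟩
  ext α
  simp only [DN, Set.mem_setOf_eq, Set.mem_inter_iff, ← ha0]
  constructor
  · rintro ⟨hs, hc⟩
    have ha0n : (a0 : ℕ) < n := a0.isLt
    refine ⟨hs, (main α hs).mp ?_⟩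
    omega
  · rintro ⟨hs, hfix⟩
    have ha0n : (a0 : ℕ) < n := a0.isLt
    have := (main α hs).mpr hfix
    exact ⟨hs, by omega⟩
end

section
/- Let n ≥ 1 and let A = {a_0 < … < a_{k−1}} be a nonempty subset of the chain C_n. Then for any monotone map α : C_n → C_n with image contained in A, the following are equivalent: α(i) = a_{k−1} for at least n − a_{k−1} elements i of C_n, and α(a_{k−1}) = a_{k−1}. Consequently the discrete a_{k−1}-neighborhood of the biggest vertex ā_{k−1} equals σ^(n){a_0,…,a_{k−1}} ∩ E^(a_{k−1})_{C_n}. -/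
/-- for α in the simplex, α takes the value a_{k−1} at least
n − a_{k−1} times iff a_{k−1} is a fixed point of α; consequently the discrete
a_{k−1}-neighborhood of the biggest vertex ā_{k−1} equals the intersection of
the simplex with E^(a_{k−1}), the endomorphisms fixing a_{k−1}. -/
theorem DN_biggest_vertex_eq (n k : ℕ) (hn : 1 ≤ n) (hk : 0 < k)
    (a : Fin k → Fin n) (ha : StrictMono a) :
    (∀ α : Fin n → Fin n, α ∈ EndoSimplex n k a →
      (n - (a ⟨k - 1, by omega⟩ : ℕ) ≤ FixCount n α (a ⟨k - 1, by omega⟩) ↔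
        α (a ⟨k - 1, by omega⟩) = a ⟨k - 1, by omega⟩)) ∧
    DN n k a ⟨k - 1, by omega⟩ ((a ⟨k - 1, by omega⟩ : ℕ)) =
      EndoSimplex n k a ∩ {α | α (a ⟨k - 1, by omega⟩) = a ⟨k - 1, by omega⟩} := by
  set m : Fin k := ⟨k - 1, by omega⟩ with hm
  set M : Fin n := a m with hM
  have hmax : ∀ j : Fin k, a j ≤ M := by
    intro j
    exact ha.monotone (by simp [hm, Fin.le_def]; omega)
  have key : ∀ α : Fin n → Fin n, α ∈ EndoSimplex n k a →
      (n - (M : ℕ) ≤ FixCount n α M ↔ α M = M) := by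
    intro α ⟨hmono, hrange⟩
    have hle : ∀ i, α i ≤ M := by
      intro i
      obtain ⟨j, hj⟩ := hrange i
      rw [← hj]; exact hmax j
    constructor
    · intro hcard
      by_contra hne
      have hlt : α M < M := lt_of_le_of_ne (hle M) hne
      have hsub : Finset.univ.filter (fun i => α i = M) ⊆ Finset.Ioi M := by
        intro i hi
        simp only [Finset.mem_filter] at hi
        simp only [Finset.mem_Ioi]
        by_contra h
        push_neg at h
        have := hmono h
        rw [hi.2] at this
        exact absurd (this.trans_lt hlt) (lt_irrefl _)
      have := Finset.card_le_card hsub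
      rw [Fin.card_Ioi] at this
      unfold FixCount at hcard
      have hMn : (M : ℕ) < n := M.isLt
      omega
    · intro hfix
      have hsub : Finset.Ici M ⊆ Finset.univ.filter (fun i => α i = M) := by
        intro i hi
        simp only [Finset.mem_Ici] at hi
        simp only [Finset.mem_filter, Finset.mem_univ, true_and]
        have h1 : M ≤ α i := hfix ▸ hmono hi
        exact le_antisymm (hle i) h1
      have := Finset.card_le_card hsub
      rw [Fin.card_Ici] at this
      unfold FixCount
      omega
  refine ⟨key, ?_⟩
  ext α
  simp only [DN, Set.mem_setOf_eq, Set.mem_inter_iff]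
  constructor
  · rintro ⟨h1, h2⟩
    exact ⟨h1, (key α h1).1 h2⟩
  · rintro ⟨h1, h2⟩
    exact ⟨h1, (key α h1).2 h2⟩
end

section
/- Let n ≥ 1 and let A = {a_0 < … < a_{k−1}} be a nonempty subset of the chain C_n. The type map T from the simplex σ^(n){a_0,…,a_{k−1}} to the endomorphism semiring Ê_{C_k} of the coordinate simplex is well defined (for each α in the simplex there is a unique monotone map T(α) : C_k → C_k with α(a_i) = a_{T(α)(i)} for all i) and is a homomorphism for both operations: T(α + β) = T(α) + T(β) and T(α·β) = T(α)·T(β) for all α, β in the simplex, where addition is pointwise maximum and multiplication is (α·β)(x) = β(α(x)). -/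
/-- the type map T is well defined (every α in the simplex has a
unique monotone type τ : Fin k → Fin k with α(a_i) = a(τ i)) and is a
homomorphism for both the pointwise maximum and composition. -/
theorem type_map_is_homomorphism (n k : ℕ) (hn : 1 ≤ n) (hk : 1 ≤ k)
    (a : Fin k → Fin n) (ha : StrictMono a) :
    (∀ α ∈ EndoSimplex n k a,
      ∃! τ : Fin k → Fin k, Monotone τ ∧ ∀ i, α (a i) = a (τ i)) ∧
    (∀ α β : Fin n → Fin n, α ∈ EndoSimplex n k a → β ∈ EndoSimplex n k a →
      ∀ τα τβ : Fin k → Fin k,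
        (∀ i, α (a i) = a (τα i)) → (∀ i, β (a i) = a (τβ i)) →
        (∀ i, max (α (a i)) (β (a i)) = a (max (τα i) (τβ i))) ∧
        (∀ i, β (α (a i)) = a (τβ (τα i)))) := by
  constructor
  · rintro α ⟨hmono, hrange⟩
    choose τ hτ using fun i => hrange (a i)
    refine ⟨τ, ⟨?_, fun i => (hτ i).symm⟩, ?_⟩
    · intro i j hij
      exact ha.le_iff_le.mp (by rw [hτ i, hτ j]; exact hmono (ha.monotone hij))
    · rintro τ' ⟨-, hτ'⟩
      funext i
      exact ha.injective (by rw [← hτ' i, hτ i])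
  · rintro α β ⟨hα, -⟩ ⟨hβ, -⟩ τα τβ hτα hτβ
    refine ⟨fun i => ?_, fun i => by rw [hτα, hτβ]⟩
    rw [hτα, hτβ, ha.monotone.map_max]
end

section
/- Let n ≥ 1 and let A = {a_0 < … < a_{k−1}} be a nonempty subset of the chain C_n. Then the set of right identities of the simplex σ^(n){a_0,…,a_{k−1}} is nonempty, is closed under pointwise maximum and composition (so it is a subsemiring), and has cardinality equal to the product ∏_{i=0}^{k−2} (a_{i+1} − a_i) of the gaps between consecutive elements of A (with the empty product equal to 1 when k = 1). -/
namespace RIaux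

variable {n k : ℕ}

def iL (i : Fin (k - 1)) : Fin k := ⟨i.1, by have := i.isLt; omega⟩
def iR (i : Fin (k - 1)) : Fin k := ⟨i.1 + 1, by have := i.isLt; omega⟩

def gap (a : Fin k → Fin n) (i : Fin (k - 1)) : ℕ := (a (iR i) : ℕ) - (a (iL i) : ℕ)

lemma haLR (a : Fin k → Fin n) (ha : StrictMono a) (i : Fin (k - 1)) :
    (a (iL i) : ℕ) < (a (iR i) : ℕ) := by
  exact ha (show iL i < iR i by simp [iL, iR, Fin.lt_def])

lemma gap_pos (a : Fin k → Fin n) (ha : StrictMono a) (i : Fin (k - 1)) :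
    0 < gap a i := by
  have := haLR a ha i; unfold gap; omega

/-- Threshold count of α in gap i. -/
def Phi (a : Fin k → Fin n) (α : Fin n → Fin n) (i : Fin (k - 1)) : ℕ :=
  (Finset.univ.filter (fun x : Fin n => (a (iL i) : ℕ) < (x : ℕ) ∧ α x = a (iL i))).card

def Ffun (a : Fin k → Fin n) (t : Fin (k - 1) → ℕ) (x : Fin n) : ℕ :=
  (Finset.univ.filter (fun i : Fin (k - 1) => (a (iL i) : ℕ) + t i < (x : ℕ))).card

lemma Ffun_le (a : Fin k → Fin n) (t : Fin (k - 1) → ℕ) (x : Fin n) :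
    Ffun a t x ≤ k - 1 := by
  have h := Finset.card_filter_le (Finset.univ : Finset (Fin (k - 1)))
    (fun i : Fin (k - 1) => (a (iL i) : ℕ) + t i < (x : ℕ))
  simpa [Ffun, Finset.card_univ] using h

def Psi (hk : 0 < k) (a : Fin k → Fin n) (t : Fin (k - 1) → ℕ) (x : Fin n) : Fin n :=
  a ⟨Ffun a t x, by have := Ffun_le a t x; omega⟩

lemma card_filter_val_lt (N v : ℕ) (h : v ≤ N) :
    ((Finset.univ : Finset (Fin N)).filter (fun i : Fin N => (i : ℕ) < v)).card = v := by
  rw [← Finset.card_range v]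
  apply Finset.card_bij (fun (i : Fin N) _ => (i : ℕ))
  · intro x hx; simp at hx ⊢; exact hx
  · intro x hx y hy hxy; exact Fin.ext hxy
  · intro b hb
    simp at hb
    exact ⟨⟨b, lt_of_lt_of_le hb h⟩, by simpa using hb, rfl⟩

section Keys

variable (a : Fin k → Fin n) (ha : StrictMono a) (α : Fin n → Fin n)
  (hm : Monotone α) (hr : ∀ x, α x ∈ Set.range a) (hf : ∀ m, α (a m) = a m)

include ha hm hf in
/-- The set counted by `Phi` sits inside the open gap interval. -/
lemma Phi_subset (i : Fin (k - 1)) :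
    (Finset.univ.filter (fun x : Fin n => (a (iL i) : ℕ) < (x : ℕ) ∧ α x = a (iL i)))
      ⊆ Finset.Ioo (a (iL i)) (a (iR i)) := by
  intro x hx
  simp only [Finset.mem_filter, Finset.mem_univ, true_and] at hx
  obtain ⟨h1, h2⟩ := hx
  have hxR : (x : ℕ) < (a (iR i) : ℕ) := by
    by_contra hcon
    push_neg at hcon
    have : a (iR i) ≤ x := by rwa [Fin.le_def]
    have h3 : a (iR i) ≤ α x := by
      calc a (iR i) = α (a (iR i)) := (hf _).symm
        _ ≤ α x := hm this
    rw [h2] at h3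
    exact absurd (haLR a ha i) (by rw [Fin.le_def] at h3; omega)
  simp only [Finset.mem_Ioo, Fin.lt_def]
  exact ⟨h1, hxR⟩

include ha hm hf in
lemma Phi_lt_gap (i : Fin (k - 1)) : Phi a α i < gap a i := by
  have h := Finset.card_le_card (Phi_subset a ha α hm hf i)
  rw [Fin.card_Ioo] at h
  have := haLR a ha i
  unfold Phi gap
  omega

include hm hf in
/-- Down-closedness: values equal to `a (iL i)` form an initial segment past `a (iL i)`. -/
lemma down_closed (i : Fin (k - 1)) {x y : Fin n}
    (hy : (a (iL i) : ℕ) < (y : ℕ)) (hyx : y ≤ x) (hx : α x = a (iL i)) :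
    α y = a (iL i) := by
  have h1 : α y ≤ a (iL i) := by rw [← hx]; exact hm hyx
  have h2 : a (iL i) ≤ α y := by
    calc a (iL i) = α (a (iL i)) := (hf _).symm
      _ ≤ α y := hm (by rw [Fin.le_def]; omega)
  exact le_antisymm h1 h2

include ha hm hr hf in
/-- Threshold characterization. -/
lemma threshold_iff (i : Fin (k - 1)) (x : Fin n) :
    (a (iL i) : ℕ) + Phi a α i < (x : ℕ) ↔ (a (iR i) : ℕ) ≤ (α x : ℕ) := by
  constructor
  · intro h
    by_contra hcon
    push_neg at hcon
    -- then α x = a (iL i)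
    have hLx : (a (iL i) : ℕ) < (x : ℕ) := by omega
    have hLe : a (iL i) ≤ α x := by
      calc a (iL i) = α (a (iL i)) := (hf _).symm
        _ ≤ α x := hm (by rw [Fin.le_def]; omega)
    obtain ⟨j, hj⟩ := hr x
    have hjil : j = iL i := by
      have h1 : iL i ≤ j := by
        rw [← ha.le_iff_le, hj]; exact hLe
      have h2 : j < iR i := by
        rw [← ha.lt_iff_lt, hj]; rw [Fin.lt_def]; omega
      apply Fin.ext
      simp only [iL, iR, Fin.le_def, Fin.lt_def] at h1 h2 ⊢
      omega
    have hxS : α x = a (iL i) := by rw [← hj, hjil]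
    -- Ioc (a iL) x ⊆ the Phi-set
    have hsub : Finset.Ioc (a (iL i)) x ⊆
        (Finset.univ.filter (fun y : Fin n => (a (iL i) : ℕ) < (y : ℕ) ∧ α y = a (iL i))) := by
      intro y hy
      simp only [Finset.mem_Ioc, Fin.lt_def] at hy
      simp only [Finset.mem_filter, Finset.mem_univ, true_and]
      exact ⟨hy.1, down_closed a α hm hf i hy.1 hy.2 hxS⟩
    have hcard := Finset.card_le_card hsub
    rw [Fin.card_Ioc] at hcard
    unfold Phi at h
    omega
  · intro h
    have hLx : (a (iL i) : ℕ) < (x : ℕ) := by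
      by_contra hcon
      push_neg at hcon
      have : α x ≤ a (iL i) := by
        calc α x ≤ α (a (iL i)) := hm (by rw [Fin.le_def]; omega)
          _ = a (iL i) := hf _
      rw [Fin.le_def] at this
      have := haLR a ha i
      omega
    by_contra hcon
    push_neg at hcon
    -- Phi-set ⊆ Ioo (a iL) x
    have hsub : (Finset.univ.filter (fun y : Fin n => (a (iL i) : ℕ) < (y : ℕ) ∧ α y = a (iL i)))
        ⊆ Finset.Ioo (a (iL i)) x := by
      intro y hy
      simp only [Finset.mem_filter, Finset.mem_univ, true_and] at hy
      obtain ⟨h1, h2⟩ := hy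
      have hyx : (y : ℕ) < (x : ℕ) := by
        by_contra hc2
        push_neg at hc2
        have : α x ≤ α y := hm (by rw [Fin.le_def]; omega)
        rw [h2, Fin.le_def] at this
        have := haLR a ha i
        omega
      simp only [Finset.mem_Ioo, Fin.lt_def]
      exact ⟨h1, hyx⟩
    have hcard := Finset.card_le_card hsub
    rw [Fin.card_Ioo] at hcard
    unfold Phi at hcon
    omega

include ha hm hr hf in
/-- `Psi ∘ Phi = id` on right identities. -/
lemma Psi_Phi (hk : 0 < k) (x : Fin n) : Psi hk a (Phi a α) x = α x := by
  obtain ⟨j, hj⟩ := hr x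
  have hfilter : (Finset.univ.filter
      (fun i : Fin (k - 1) => (a (iL i) : ℕ) + Phi a α i < (x : ℕ)))
      = Finset.univ.filter (fun i : Fin (k - 1) => (i : ℕ) < (j : ℕ)) := by
    apply Finset.filter_congr
    intro i _
    rw [threshold_iff a ha α hm hr hf i x, ← hj]
    constructor
    · intro h
      have := (ha.le_iff_le (a := iR i) (b := j)).1 (by rw [Fin.le_def]; exact h)
      simp only [iR, Fin.le_def] at this
      omega
    · intro h
      have : iR i ≤ j := by simp only [iR, Fin.le_def]; omega
      exact (ha.le_iff_le).2 this
  have hF : Ffun a (Phi a α) x = (j : ℕ) := by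
    unfold Ffun
    rw [hfilter, card_filter_val_lt]
    have := j.isLt; omega
  unfold Psi
  rw [← hj]
  congr 1
  exact Fin.ext hF

end Keys

section Keys2

variable (a : Fin k → Fin n) (ha : StrictMono a) (t : Fin (k - 1) → ℕ)
  (ht : ∀ i, t i < gap a i)

include ha ht in
lemma Ffun_at_a (m : Fin k) : Ffun a t (a m) = (m : ℕ) := by
  unfold Ffun
  have hfilter : (Finset.univ.filter
      (fun i : Fin (k - 1) => (a (iL i) : ℕ) + t i < ((a m : Fin n) : ℕ)))
      = Finset.univ.filter (fun i : Fin (k - 1) => (i : ℕ) < (m : ℕ)) := by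
    apply Finset.filter_congr
    intro i _
    constructor
    · intro h
      by_contra hc
      push_neg at hc
      have : a m ≤ a (iL i) := ha.monotone (by simp only [iL, Fin.le_def]; omega)
      rw [Fin.le_def] at this
      omega
    · intro h
      have h1 : a (iR i) ≤ a m := ha.monotone (by simp only [iR, Fin.le_def]; omega)
      rw [Fin.le_def] at h1
      have h2 := ht i
      have h3 := haLR a ha i
      unfold gap at h2
      omega
  rw [hfilter, card_filter_val_lt]
  have := m.isLt; omega

include ha in
lemma Psi_monotone (hk : 0 < k) : Monotone (Psi hk a t) := by
  intro x y hxy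
  unfold Psi
  apply ha.monotone
  rw [Fin.mk_le_mk]
  apply Finset.card_le_card
  intro i hi
  rw [Fin.le_def] at hxy
  simp only [Finset.mem_filter, Finset.mem_univ, true_and] at hi ⊢
  omega

lemma Psi_range (hk : 0 < k) (x : Fin n) : Psi hk a t x ∈ Set.range a := ⟨_, rfl⟩

include ha ht in
lemma Psi_fix (hk : 0 < k) (m : Fin k) : Psi hk a t (a m) = a m := by
  unfold Psi
  congr 1
  exact Fin.ext (Ffun_at_a a ha t ht m)

include ha ht in
/-- `Phi ∘ Psi = id`. -/
lemma Phi_Psi (hk : 0 < k) (i : Fin (k - 1)) : Phi a (Psi hk a t) i = t i := by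
  have hbd : (a (iL i) : ℕ) + t i < n := by
    have h1 := ht i; have h2 := haLR a ha i
    have h3 := (a (iR i)).isLt
    unfold gap at h1; omega
  have hkey : ∀ x : Fin n, (a (iL i) : ℕ) < (x : ℕ) →
      (Psi hk a t x = a (iL i) ↔ (x : ℕ) ≤ (a (iL i) : ℕ) + t i) := by
    intro x hLx
    have hinj : Psi hk a t x = a (iL i) ↔ Ffun a t x = (i : ℕ) := by
      unfold Psi
      rw [ha.injective.eq_iff]
      constructor
      · intro h; have := congrArg Fin.val h; simpa [iL] using this
      · intro h; apply Fin.ext; simpa [iL] using h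
    rw [hinj]
    constructor
    · intro h
      by_contra hc
      push_neg at hc
      have hsub : Finset.univ.filter (fun j : Fin (k - 1) => (j : ℕ) < (i : ℕ) + 1)
          ⊆ Finset.univ.filter (fun j : Fin (k - 1) => (a (iL j) : ℕ) + t j < (x : ℕ)) := by
        intro j hj
        simp only [Finset.mem_filter, Finset.mem_univ, true_and] at hj ⊢
        rcases Nat.lt_or_ge (j : ℕ) (i : ℕ) with hji | hji
        · have h1 : a (iR j) ≤ a (iL i) := ha.monotone (by simp only [iL, iR, Fin.le_def]; omega)
          rw [Fin.le_def] at h1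
          have h2 := ht j; have h3 := haLR a ha j
          unfold gap at h2; omega
        · have hji' : (j : ℕ) = (i : ℕ) := by omega
          have hjeq : j = i := Fin.ext hji'
          rw [hjeq]; omega
      have hcard := Finset.card_le_card hsub
      rw [card_filter_val_lt _ _ (by have := i.isLt; omega)] at hcard
      unfold Ffun at h
      omega
    · intro h
      have hfilter : Finset.univ.filter (fun j : Fin (k - 1) => (a (iL j) : ℕ) + t j < (x : ℕ))
          = Finset.univ.filter (fun j : Fin (k - 1) => (j : ℕ) < (i : ℕ)) := by
        apply Finset.filter_congr
        intro j _
        constructor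
        · intro hjx
          by_contra hc
          push_neg at hc
          rcases Nat.lt_or_ge (i : ℕ) (j : ℕ) with hij | hij
          · have h1 : a (iR i) ≤ a (iL j) := ha.monotone (by simp only [iL, iR, Fin.le_def]; omega)
            rw [Fin.le_def] at h1
            have h2 := ht i; have h3 := haLR a ha i
            unfold gap at h2; omega
          · have : j = i := Fin.ext (by omega)
            rw [this] at hjx; omega
        · intro hji
          have h1 : a (iR j) ≤ a (iL i) := ha.monotone (by simp only [iL, iR, Fin.le_def]; omega)
          rw [Fin.le_def] at h1
          have h2 := ht j; have h3 := haLR a ha j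
          unfold gap at h2; omega
      unfold Ffun
      rw [hfilter, card_filter_val_lt _ _ (by have := i.isLt; omega)]
  have hset : (Finset.univ.filter
      (fun x : Fin n => (a (iL i) : ℕ) < (x : ℕ) ∧ Psi hk a t x = a (iL i)))
      = Finset.Ioc (a (iL i)) (⟨(a (iL i) : ℕ) + t i, hbd⟩ : Fin n) := by
    ext x
    simp only [Finset.mem_filter, Finset.mem_univ, true_and, Finset.mem_Ioc,
      Fin.lt_def, Fin.le_def]
    constructor
    · rintro ⟨h1, h2⟩
      exact ⟨h1, (hkey x h1).1 h2⟩
    · rintro ⟨h1, h2⟩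
      exact ⟨h1, (hkey x h1).2 h2⟩
  unfold Phi
  rw [hset, Fin.card_Ioc]
  show (a (iL i) : ℕ) + t i - (a (iL i) : ℕ) = t i
  omega

end Keys2

end RIaux

/-- the set of right identities of the simplex is nonempty, is a
subsemiring (closed under pointwise maximum and composition), and has exactly
∏_{i=0}^{k−2} (a_{i+1} − a_i) elements. -/
theorem right_identities_semiring_card (n k : ℕ) (hn : 1 ≤ n) (hk : 0 < k)
    (a : Fin k → Fin n) (ha : StrictMono a) :
    let RI : Set (Fin n → Fin n) :=
      {α | α ∈ EndoSimplex n k a ∧ ∀ β ∈ EndoSimplex n k a, ∀ x, α (β x) = β x}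
    RI.Nonempty ∧
    (∀ α ∈ RI, ∀ β ∈ RI,
      (fun x => max (α x) (β x)) ∈ RI ∧ (fun x => β (α x)) ∈ RI) ∧
    RI.ncard = ∏ i : Fin (k - 1),
      ((a ⟨i.1 + 1, by have := i.isLt; omega⟩ : ℕ) -
        (a ⟨i.1, by have := i.isLt; omega⟩ : ℕ)) := by
  intro RI
  have hmem : ∀ α, α ∈ RI ↔
      Monotone α ∧ (∀ x, α x ∈ Set.range a) ∧ (∀ m, α (a m) = a m) := by
    intro α
    constructor
    · rintro ⟨⟨hmono, hrange⟩, hid⟩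
      refine ⟨hmono, hrange, fun m => ?_⟩
      have hβ : (fun _ : Fin n => a m) ∈ EndoSimplex n k a :=
        ⟨monotone_const, fun x => ⟨m, rfl⟩⟩
      exact hid _ hβ ⟨0, hn⟩
    · rintro ⟨hmono, hrange, hfix⟩
      refine ⟨⟨hmono, hrange⟩, fun β hβ x => ?_⟩
      obtain ⟨m, hm⟩ := hβ.2 x
      rw [← hm]; exact hfix m
  have hcard : RI.ncard = ∏ i : Fin (k - 1), RIaux.gap a i := by
    rw [← Nat.card_coe_set_eq]
    have e : RI ≃ (∀ i : Fin (k - 1), Fin (RIaux.gap a i)) :=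
      { toFun := fun α => fun i => ⟨RIaux.Phi a α.1 i,
          RIaux.Phi_lt_gap a ha α.1 ((hmem α.1).1 α.2).1 ((hmem α.1).1 α.2).2.2 i⟩
        invFun := fun t => ⟨RIaux.Psi hk a (fun i => (t i : ℕ)),
          (hmem _).2 ⟨RIaux.Psi_monotone a ha _ hk, RIaux.Psi_range a _ hk,
            RIaux.Psi_fix a ha _ (fun i => (t i).isLt) hk⟩⟩
        left_inv := fun α => Subtype.ext (funext fun x => by
          obtain ⟨hmono, hrange, hfix⟩ := (hmem α.1).1 α.2
          exact RIaux.Psi_Phi a ha α.1 hmono hrange hfix hk x)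
        right_inv := fun t => funext fun i => Fin.ext
          (RIaux.Phi_Psi a ha _ (fun j => (t j).isLt) hk i) }
    rw [Nat.card_congr e, Nat.card_pi]
    simp
  refine ⟨?_, ?_, ?_⟩
  · apply Set.nonempty_of_ncard_ne_zero
    have hpos : 0 < ∏ i : Fin (k - 1), RIaux.gap a i :=
      Finset.prod_pos fun i _ => RIaux.gap_pos a ha i
    rw [hcard]; omega
  · intro α hα β hβ
    obtain ⟨hmα, hrα, hfα⟩ := (hmem α).1 hα
    obtain ⟨hmβ, hrβ, hfβ⟩ := (hmem β).1 hβ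
    constructor
    · apply (hmem _).2
      refine ⟨hmα.max hmβ, fun x => ?_, fun m => ?_⟩
      · rcases le_total (α x) (β x) with h | h
        · rw [max_eq_right h]; exact hrβ x
        · rw [max_eq_left h]; exact hrα x
      · show max (α (a m)) (β (a m)) = a m
        rw [hfα m, hfβ m, max_self]
    · apply (hmem _).2
      refine ⟨hmβ.comp hmα, fun x => hrβ _, fun m => ?_⟩
      show β (α (a m)) = a m
      rw [hfα m, hfβ m]
  · rw [hcard]; rfl
end

section
/- Let n ≥ 2 and let A = {a_0 < … < a_{k−1}} be a subset of the chain C_n with k ≥ 2 and k < n (so A is a proper subset of C_n with at least two elements). Then the simplex σ^(n){a_0,…,a_{k−1}} has no left identity: there is no ω ∈ σ^(n){a_0,…,a_{k−1}} such that ω·β = β (that is, β(ω(x)) = β(x) for all x) for every β ∈ σ^(n){a_0,…,a_{k−1}}. -/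
/-- a simplex on a proper subset A of C_n with at least two
elements has no left identity. -/
theorem no_left_identity (n k : ℕ) (hn : 2 ≤ n) (hk : 2 ≤ k) (hkn : k < n)
    (a : Fin k → Fin n) (ha : StrictMono a) :
    ¬ ∃ ω ∈ EndoSimplex n k a, ∀ β ∈ EndoSimplex n k a, ∀ x, β (ω x) = β x := by
  rintro ⟨ω, ⟨hmono, hrange⟩, h⟩
  -- a is not surjective
  have hnotsurj : ¬ Function.Surjective a := by
    intro hs
    have := Fintype.card_le_of_surjective a hs
    simp at this
    omega
  rw [Function.Surjective] at hnotsurj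
  push_neg at hnotsurj
  obtain ⟨x, hx⟩ := hnotsurj
  have hne : ω x ≠ x := by
    intro hEq
    obtain ⟨i, hi⟩ := hrange x
    exact hx i (hEq ▸ hi)
  set b0 : Fin n := a ⟨0, by omega⟩ with hb0
  set b1 : Fin n := a ⟨1, by omega⟩ with hb1
  have hb01 : b0 < b1 := ha (by simp [Fin.lt_def])
  have step : ∀ t : Fin n, (fun y => if y ≤ t then b0 else b1) ∈ EndoSimplex n k a := by
    intro t
    constructor
    · intro y z hyz
      dsimp only
      split_ifs with h1 h2 h2
      · exact le_refl _
      · exact le_of_lt hb01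
      · exact absurd (hyz.trans h2) h1
      · exact le_refl _
    · intro y
      dsimp only
      split_ifs
      · exact ⟨_, rfl⟩
      · exact ⟨_, rfl⟩
  rcases lt_or_gt_of_ne hne with hlt | hgt
  · -- ω x < x : threshold at ω x
    have := h _ (step (ω x)) x
    simp only [le_refl, if_true] at this
    rw [if_neg (not_le_of_gt hlt)] at this
    exact absurd this (ne_of_lt hb01)
  · -- x < ω x : threshold at x
    have := h _ (step x) x
    simp only [le_refl, if_true] at this
    rw [if_neg (not_le_of_gt hgt)] at this
    exact absurd this (ne_of_lt hb01).symm
end
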